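/- Let 𝒳, 𝒴 be finite sets, let (X,Y) have joint probability mass function p on 𝒳 × 𝒴, let r(·|·) be a conditional probability mass function on 𝒴 given 𝒳 with r(y|x) > 0 whenever p(x,y) > 0, let Ω be a finite set, let P1 and P2 be probability mass functions on Ω, and let μ ∈ [0,1]. Define the cross-entropy loss L_f(r) = Σ_{x,y} p(x,y)(−log r(y|x)). Then: sup over D : Ω → (0,1) of [(1−μ)·L_f(r) − μ·(Σ_ω P1(ω)(−log D(ω)) + Σ_ω P2(ω)(−log(1−D(ω))))] = (1−μ)·L_f(r) + 2μ·JSD(P1‖P2) − μ·log 4 ≥ (1−μ)·H(Y|X) − μ·log 4. -/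

import Mathlib

/-- Kullback–Leibler divergence between pmfs on a finite set. -/
noncomputable def KLdiv {Ω : Type*} [Fintype Ω] (p q : Ω → ℝ) : ℝ :=
  ∑ ω, p ω * Real.log (p ω / q ω)

/-- Jensen–Shannon divergence: `JSD(p‖q) = ½ KL(p‖m) + ½ KL(q‖m)` with `m = (p+q)/2`. -/
noncomputable def JSD {Ω : Type*} [Fintype Ω] (p q : Ω → ℝ) : ℝ :=
  KLdiv p (fun ω => (p ω + q ω) / 2) / 2 + KLdiv q (fun ω => (p ω + q ω) / 2) / 2

/-- The cross-entropy discriminator loss. -/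
noncomputable def discLoss {Ω : Type*} [Fintype Ω] (p q D : Ω → ℝ) : ℝ :=
  ∑ ω, p ω * (-Real.log (D ω)) + ∑ ω, q ω * (-Real.log (1 - D ω))

/-- The expected negative log-likelihood loss `L_f(r) = ∑_{x,y} p(x,y)(−log r(y|x))`. -/
noncomputable def nllLoss {𝒳 𝒴 : Type*} [Fintype 𝒳] [Fintype 𝒴] (p r : 𝒳 → 𝒴 → ℝ) : ℝ :=
  ∑ x, ∑ y, p x y * (-Real.log (r x y))

/-- The conditional entropy `H(Y|X) = ∑_{x,y} p(x,y)(−log p(y|x))`. -/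
noncomputable def condEnt {𝒳 𝒴 : Type*} [Fintype 𝒳] [Fintype 𝒴] (p : 𝒳 → 𝒴 → ℝ) : ℝ :=
  ∑ x, ∑ y, p x y * (-Real.log (p x y / ∑ y', p x y'))

/-- Gibbs-type pointwise inequality. -/
lemma key_ineq (a c : ℝ) (ha : 0 ≤ a) (hc : 0 ≤ c) (h : 0 < a → 0 < c) :
    a - c ≤ a * Real.log (a / c) := by
  rcases ha.eq_or_lt with h0 | h0
  · simp [← h0]; linarith
  · have hc' := h h0
    have hlog := Real.log_le_sub_one_of_pos (show 0 < c / a by positivity)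
    have hrw : Real.log (a / c) = - Real.log (c / a) := by
      rw [← Real.log_inv, inv_div]
    have h2 : a * Real.log (c / a) ≤ a * (c / a - 1) :=
      mul_le_mul_of_nonneg_left hlog h0.le
    have h3 : a * (c / a - 1) = c - a := by field_simp
    rw [hrw]
    nlinarith

lemma bracket (a s t : ℝ) (ha : 0 ≤ a) (has : a ≤ s) (hs : 0 ≤ s) (ht : 0 ≤ t)
    (hat : 0 < a → 0 < t) :
    a - s * t ≤ a * (-Real.log t) - a * (-Real.log (a / s)) := by
  rcases ha.eq_or_lt with h0 | h0
  · rw [← h0]; simp; positivity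
  · have ht' := hat h0
    have hs' : 0 < s := lt_of_lt_of_le h0 has
    have key' := key_ineq a (s * t) ha (by positivity) (fun _ => by positivity)
    have hrw : Real.log (a / (s * t)) = Real.log (a / s) - Real.log t := by
      rw [show a / (s * t) = (a / s) / t by rw [div_div]]
      exact Real.log_div (ne_of_gt (div_pos h0 hs')) (ne_of_gt ht')
    have : a * Real.log (a / (s * t)) = a * (-Real.log t) - a * (-Real.log (a / s)) := by
      rw [hrw]; ring
    linarith

lemma bracket2 (a s ε : ℝ) (ha : 0 ≤ a) (has : a ≤ s) (hε : 0 < ε) :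
    a * (-Real.log ((a + ε) / (s + 2 * ε))) ≤ a * (-Real.log (a / s)) + 2 * ε := by
  rcases ha.eq_or_lt with h0 | h0
  · rw [← h0]; simp; positivity
  · have hs : 0 < s := lt_of_lt_of_le h0 has
    have hd : 0 < s + 2 * ε := by positivity
    have hmono : Real.log (a / (s + 2 * ε)) ≤ Real.log ((a + ε) / (s + 2 * ε)) := by
      apply Real.log_le_log (by positivity)
      gcongr
      linarith
    have hsplit : a / (s + 2 * ε) = (a / s) * (s / (s + 2 * ε)) := by
      field_simp
    have hlogsplit : Real.log (a / (s + 2 * ε))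
        = Real.log (a / s) + Real.log (s / (s + 2 * ε)) := by
      rw [hsplit, Real.log_mul (by positivity) (by positivity)]
    have hinv : Real.log (s / (s + 2 * ε)) = - Real.log ((s + 2 * ε) / s) := by
      rw [← Real.log_inv, inv_div]
    have hle : Real.log ((s + 2 * ε) / s) ≤ 2 * ε / s := by
      have h4 : (s + 2 * ε) / s - 1 = 2 * ε / s := by field_simp; ring
      linarith [Real.log_le_sub_one_of_pos (show 0 < (s + 2 * ε) / s by positivity)]
    have hfin : a * Real.log ((s + 2 * ε) / s) ≤ 2 * ε := by
      have h1 : a * Real.log ((s + 2 * ε) / s) ≤ s * Real.log ((s + 2 * ε) / s) := by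
        apply mul_le_mul_of_nonneg_right has
        have : (1:ℝ) ≤ (s + 2 * ε) / s := by
          rw [le_div_iff₀ hs]; linarith
        simpa using Real.log_nonneg this
      have h2 : s * Real.log ((s + 2 * ε) / s) ≤ s * (2 * ε / s) :=
        mul_le_mul_of_nonneg_left hle hs.le
      have h3 : s * (2 * ε / s) = 2 * ε := by field_simp
      linarith
    have hchain : a * (-Real.log ((a + ε) / (s + 2 * ε)))
        ≤ a * (-Real.log (a / (s + 2 * ε))) := by
      apply mul_le_mul_of_nonneg_left (by linarith) h0.le
    have : a * (-Real.log (a / (s + 2 * ε)))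
        = a * (-Real.log (a / s)) + a * Real.log ((s + 2 * ε) / s) := by
      rw [hlogsplit, hinv]; ring
    linarith

/-- the single-parameter form of the adversarial value function:
`sup_D [(1−μ)L_f(r) − μ·L_d(D)] = (1−μ)L_f(r) + 2μ·JSD(P1‖P2) − μ·log 4`
`≥ (1−μ)·H(Y|X) − μ·log 4`. -/
theorem stmt_13 {𝒳 𝒴 Ω : Type*} [Fintype 𝒳] [Fintype 𝒴] [Fintype Ω]
    (p : 𝒳 → 𝒴 → ℝ) (hp0 : ∀ x y, 0 ≤ p x y) (hp1 : ∑ x, ∑ y, p x y = 1)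
    (r : 𝒳 → 𝒴 → ℝ) (hr0 : ∀ x y, 0 ≤ r x y) (hr1 : ∀ x, ∑ y, r x y = 1)
    (hrpos : ∀ x y, 0 < p x y → 0 < r x y)
    (P1 P2 : Ω → ℝ) (hP10 : ∀ ω, 0 ≤ P1 ω) (hP11 : ∑ ω, P1 ω = 1)
    (hP20 : ∀ ω, 0 ≤ P2 ω) (hP21 : ∑ ω, P2 ω = 1)
    (μ : ℝ) (hμ : μ ∈ Set.Icc (0 : ℝ) 1) :
    sSup {v : ℝ | ∃ D : Ω → ℝ, (∀ ω, D ω ∈ Set.Ioo (0 : ℝ) 1) ∧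
          v = (1 - μ) * nllLoss p r - μ * discLoss P1 P2 D}
        = (1 - μ) * nllLoss p r + 2 * μ * JSD P1 P2 - μ * Real.log 4 ∧
    (1 - μ) * condEnt p - μ * Real.log 4
      ≤ (1 - μ) * nllLoss p r + 2 * μ * JSD P1 P2 - μ * Real.log 4 := by
  obtain ⟨hμ0, hμ1⟩ := hμ
  -- the pointwise-optimal discriminator value
  set M : ℝ := ∑ ω, (P1 ω * (-Real.log (P1 ω / (P1 ω + P2 ω)))
      + P2 ω * (-Real.log (P2 ω / (P1 ω + P2 ω)))) with hM
  -- (A) lower bound on discLoss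
  have hA : ∀ D : Ω → ℝ, (∀ ω, D ω ∈ Set.Ioo (0 : ℝ) 1) → M ≤ discLoss P1 P2 D := by
    intro D hD
    have hdisc : discLoss P1 P2 D
        = ∑ ω, (P1 ω * (-Real.log (D ω)) + P2 ω * (-Real.log (1 - D ω))) := by
      rw [discLoss, ← Finset.sum_add_distrib]
    rw [hdisc, hM]
    apply Finset.sum_le_sum
    intro ω _
    obtain ⟨ht0, ht1⟩ := hD ω
    have b1 := bracket (P1 ω) (P1 ω + P2 ω) (D ω) (hP10 ω)
      (by linarith [hP20 ω]) (by linarith [hP10 ω, hP20 ω]) ht0.le (fun _ => ht0)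
    have b2 := bracket (P2 ω) (P1 ω + P2 ω) (1 - D ω) (hP20 ω)
      (by linarith [hP10 ω]) (by linarith [hP10 ω, hP20 ω]) (by linarith)
      (fun _ => by linarith)
    linarith
  -- (B) identity: M = log 4 − 2·JSD
  have hKL1 : KLdiv P1 (fun ω => (P1 ω + P2 ω) / 2)
      = Real.log 2 - ∑ ω, P1 ω * (-Real.log (P1 ω / (P1 ω + P2 ω))) := by
    rw [KLdiv]
    have : ∀ ω ∈ Finset.univ, P1 ω * Real.log (P1 ω / ((P1 ω + P2 ω) / 2))
        = P1 ω * Real.log 2 - P1 ω * (-Real.log (P1 ω / (P1 ω + P2 ω))) := by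
      intro ω _
      rcases (hP10 ω).eq_or_lt with h0 | h0
      · rw [← h0]; ring
      · have hs : 0 < P1 ω + P2 ω := by linarith [hP20 ω]
        have : P1 ω / ((P1 ω + P2 ω) / 2) = 2 * (P1 ω / (P1 ω + P2 ω)) := by
          field_simp
        rw [this, Real.log_mul (by norm_num) (by positivity)]
        ring
    rw [Finset.sum_congr rfl this, Finset.sum_sub_distrib, ← Finset.sum_mul, hP11, one_mul]
  have hKL2 : KLdiv P2 (fun ω => (P1 ω + P2 ω) / 2)
      = Real.log 2 - ∑ ω, P2 ω * (-Real.log (P2 ω / (P1 ω + P2 ω))) := by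
    rw [KLdiv]
    have : ∀ ω ∈ Finset.univ, P2 ω * Real.log (P2 ω / ((P1 ω + P2 ω) / 2))
        = P2 ω * Real.log 2 - P2 ω * (-Real.log (P2 ω / (P1 ω + P2 ω))) := by
      intro ω _
      rcases (hP20 ω).eq_or_lt with h0 | h0
      · rw [← h0]; ring
      · have hs : 0 < P1 ω + P2 ω := by linarith [hP10 ω]
        have : P2 ω / ((P1 ω + P2 ω) / 2) = 2 * (P2 ω / (P1 ω + P2 ω)) := by
          field_simp
        rw [this, Real.log_mul (by norm_num) (by positivity)]
        ring
    rw [Finset.sum_congr rfl this, Finset.sum_sub_distrib, ← Finset.sum_mul, hP21, one_mul]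
  have hlog4 : Real.log 4 = 2 * Real.log 2 := by
    rw [show (4:ℝ) = 2 ^ 2 by norm_num, Real.log_pow]; norm_num
  have hB : M = Real.log 4 - 2 * JSD P1 P2 := by
    rw [JSD, hKL1, hKL2, hlog4, hM, Finset.sum_add_distrib]
    ring
  -- (C) near-optimal discriminators
  have hC : ∀ ε : ℝ, 0 < ε →
      discLoss P1 P2 (fun ω => (P1 ω + ε) / (P1 ω + P2 ω + 2 * ε))
        ≤ M + 4 * ε * (Fintype.card Ω : ℝ) := by
    intro ε hε
    have hdisc : discLoss P1 P2 (fun ω => (P1 ω + ε) / (P1 ω + P2 ω + 2 * ε))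
        = ∑ ω, (P1 ω * (-Real.log ((P1 ω + ε) / (P1 ω + P2 ω + 2 * ε)))
            + P2 ω * (-Real.log (1 - (P1 ω + ε) / (P1 ω + P2 ω + 2 * ε)))) := by
      rw [discLoss, ← Finset.sum_add_distrib]
    rw [hdisc, hM]
    have hcard : (4 : ℝ) * ε * (Fintype.card Ω : ℝ) = ∑ _ω : Ω, 4 * ε := by
      rw [Finset.sum_const, Finset.card_univ, nsmul_eq_mul]; ring
    rw [hcard, ← Finset.sum_add_distrib]
    apply Finset.sum_le_sum
    intro ω _
    have hs : 0 < P1 ω + P2 ω + 2 * ε := by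
      have := hP10 ω; have := hP20 ω; linarith
    have h1m : 1 - (P1 ω + ε) / (P1 ω + P2 ω + 2 * ε)
        = (P2 ω + ε) / (P1 ω + P2 ω + 2 * ε) := by
      rw [eq_div_iff hs.ne', sub_mul, div_mul_cancel₀ _ hs.ne']
      ring
    rw [h1m]
    have b1 := bracket2 (P1 ω) (P1 ω + P2 ω) ε (hP10 ω) (by linarith [hP20 ω]) hε
    have b2 := bracket2 (P2 ω) (P1 ω + P2 ω) ε (hP20 ω) (by linarith [hP10 ω]) hε
    linarith
  -- JSD nonneg, via M ≤ discLoss at D = 1/2 = log 4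
  have hhalf : discLoss P1 P2 (fun _ => (1:ℝ)/2) = Real.log 4 := by
    rw [discLoss]
    have : (1:ℝ) - 1/2 = 1/2 := by norm_num
    simp only [this]
    rw [← Finset.sum_mul, ← Finset.sum_mul, hP11, hP21, hlog4]
    rw [show -Real.log (1/2) = Real.log 2 by
      rw [show (1:ℝ)/2 = 2⁻¹ by norm_num, Real.log_inv]; ring]
    ring
  have hJSD : 0 ≤ JSD P1 P2 := by
    have := hA (fun _ => (1:ℝ)/2) (fun ω => by constructor <;> norm_num)
    rw [hhalf, hB] at this
    linarith
  -- conditional entropy ≤ nll loss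
  have hce : condEnt p ≤ nllLoss p r := by
    rw [condEnt, nllLoss]
    apply Finset.sum_le_sum
    intro x _
    have hs0 : 0 ≤ ∑ y', p x y' := Finset.sum_nonneg fun y _ => hp0 x y
    have hkey : ∀ y ∈ Finset.univ,
        p x y - (∑ y', p x y') * r x y
          ≤ p x y * (-Real.log (r x y)) - p x y * (-Real.log (p x y / ∑ y', p x y')) := by
      intro y _
      exact bracket (p x y) (∑ y', p x y') (r x y) (hp0 x y)
        (Finset.single_le_sum (fun y' _ => hp0 x y') (Finset.mem_univ y)) hs0
        (hr0 x y) (hrpos x y)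
    have hsum := Finset.sum_le_sum hkey
    rw [Finset.sum_sub_distrib, Finset.sum_sub_distrib, ← Finset.mul_sum, hr1 x] at hsum
    simp only [mul_one, sub_self] at hsum
    linarith
  refine ⟨?_, ?_⟩
  · apply csSup_eq_of_forall_le_of_forall_lt_exists_gt
    · exact ⟨(1 - μ) * nllLoss p r - μ * discLoss P1 P2 (fun _ => (1:ℝ)/2),
        fun _ => (1:ℝ)/2, fun ω => by constructor <;> norm_num, rfl⟩
    · rintro v ⟨D, hD, rfl⟩
      have h1 : μ * M ≤ μ * discLoss P1 P2 D := mul_le_mul_of_nonneg_left (hA D hD) hμ0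
      have h2 : μ * M = μ * Real.log 4 - 2 * (μ * JSD P1 P2) := by rw [hB]; ring
      nlinarith
    · intro w hw
      set N : ℝ := (Fintype.card Ω : ℝ) with hN
      have hN0 : 0 ≤ N := Nat.cast_nonneg _
      set δ : ℝ := ((1 - μ) * nllLoss p r + 2 * μ * JSD P1 P2 - μ * Real.log 4) - w with hδ
      have hδ0 : 0 < δ := by rw [hδ]; linarith
      set ε : ℝ := δ / (8 * (N + 1)) with hε
      have hε0 : 0 < ε := by rw [hε]; positivity
      have hεN : 4 * ε * N < δ := by
        have hεδ : ε * (8 * (N + 1)) = δ := by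
          rw [hε]; field_simp
        nlinarith [mul_nonneg hε0.le hN0]
      refine ⟨(1 - μ) * nllLoss p r
          - μ * discLoss P1 P2 (fun ω => (P1 ω + ε) / (P1 ω + P2 ω + 2 * ε)),
        ⟨fun ω => (P1 ω + ε) / (P1 ω + P2 ω + 2 * ε), fun ω => ?_, rfl⟩, ?_⟩
      · have := hP10 ω; have := hP20 ω
        constructor
        · positivity
        · rw [div_lt_one (by linarith)]; linarith
      · have hcc := hC ε hε0
        have h1 : μ * discLoss P1 P2 (fun ω => (P1 ω + ε) / (P1 ω + P2 ω + 2 * ε))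
            ≤ μ * (M + 4 * ε * N) := mul_le_mul_of_nonneg_left hcc hμ0
        have h2 : μ * (M + 4 * ε * N) ≤ μ * M + 4 * ε * N := by
          have : μ * (4 * ε * N) ≤ 1 * (4 * ε * N) := by
            apply mul_le_mul_of_nonneg_right hμ1
            positivity
          nlinarith
        have h3 : μ * M = μ * Real.log 4 - 2 * (μ * JSD P1 P2) := by rw [hB]; ring
        have : w = (1 - μ) * nllLoss p r + 2 * μ * JSD P1 P2 - μ * Real.log 4 - δ := by
          rw [hδ]; ring
        linarith
  · have h1 : (1 - μ) * condEnt p ≤ (1 - μ) * nllLoss p r :=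
      mul_le_mul_of_nonneg_left hce (by linarith)
    have h2 : 0 ≤ 2 * μ * JSD P1 P2 := by positivity
    linarith
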